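/- Let F_q be a finite field, let 0 ≤ d_1 ≤ d_2 be integers, let 0 ≤ r_1 ≤ d_1 and r_2 ≥ 0. If Q and Q′ are symmetric bilinear forms on F_q^{d_1}, both of rank r_1, then the number of symmetric bilinear forms on F_q^{d_2} of rank r_2 whose restriction to F_q^{d_1} equals Q is equal to the corresponding number for Q′. (The extension count depends only on d_2, r_2, d_1, r_1.) -/

import Mathlib

open Matrix
set_option linter.unusedSectionVars false
set_option maxHeartbeats 1000000

private lemma card_reindex_aux {K : Type} [Field K] {σ σ' τ τ' : Type}
    [Fintype σ] [Fintype σ'] [DecidableEq σ] [DecidableEq σ']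
    [Fintype τ] [Fintype τ'] [DecidableEq τ] [DecidableEq τ']
    (r₂ : ℕ) (e : σ ≃ σ') (f : τ ≃ τ') (u : τ → σ) (u' : τ' → σ')
    (hc : ∀ t, e (u t) = u' (f t)) (Q : Matrix τ τ K) :
    Nat.card {M : Matrix σ σ K // M.IsSymm ∧ M.rank = r₂ ∧ M.submatrix u u = Q} =
    Nat.card {M : Matrix σ' σ' K // M.IsSymm ∧ M.rank = r₂ ∧
      M.submatrix u' u' = Matrix.reindex f f Q} := by
  apply Nat.card_congr
  refine Equiv.subtypeEquiv (Matrix.reindex e e) fun M => ?_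
  have hu : ∀ t', e.symm (u' t') = u (f.symm t') := by
    intro t'
    rw [Equiv.symm_apply_eq, hc, Equiv.apply_symm_apply]
  constructor
  · rintro ⟨h1, h2, h3⟩
    refine ⟨?_, ?_, ?_⟩
    · show _ᵀ = _
      rw [reindex_apply, transpose_submatrix, ← reindex_apply, ← reindex_apply,
        Equiv.apply_eq_iff_eq]
      exact h1
    · rw [rank_reindex]; exact h2
    · ext a b
      simp only [reindex_apply, submatrix_apply, hu]
      rw [← h3]; rfl
  · rintro ⟨h1, h2, h3⟩
    refine ⟨?_, ?_, ?_⟩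
    · have h1' : reindex e e Mᵀ = reindex e e M := by
        rw [reindex_apply, reindex_apply, ← transpose_submatrix]; exact h1
      exact (reindex e e).injective h1'
    · rw [← h2, rank_reindex]
    · ext a b
      have := congrFun (congrFun h3 (f a)) (f b)
      simp only [reindex_apply, submatrix_apply, hu, Equiv.symm_apply_apply] at this
      simpa using this

section cong
variable {K : Type} [Field K] {δ γ : Type}
    [Fintype δ] [DecidableEq δ] [Fintype γ] [DecidableEq γ]

private lemma hat_mul (A B : Matrix δ δ K) :
    fromBlocks A 0 0 (1 : Matrix γ γ K) * fromBlocks B 0 0 1 = fromBlocks (A * B) 0 0 1 := by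
  rw [fromBlocks_multiply]; simp

private lemma hat_det (A : Matrix δ δ K) :
    (fromBlocks A 0 0 (1 : Matrix γ γ K)).det = A.det := by
  rw [det_fromBlocks_zero₂₁, det_one, mul_one]

private lemma hat_transpose (A : Matrix δ δ K) :
    (fromBlocks A 0 0 (1 : Matrix γ γ K))ᵀ = fromBlocks Aᵀ 0 0 1 := by
  rw [fromBlocks_transpose, transpose_zero, transpose_zero, transpose_one]

private lemma submatrix_inl_fromBlocks (A : Matrix δ δ K) (B C) (D : Matrix γ γ K) :
    (fromBlocks A B C D).submatrix Sum.inl Sum.inl = A := rfl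

private lemma conj_key (R : Matrix δ δ K) (hR : IsUnit R.det)
    (M : Matrix (δ ⊕ γ) (δ ⊕ γ) K) (hM : M.IsSymm) :
    ((fromBlocks R 0 0 1)ᵀ * M * fromBlocks R 0 0 1).IsSymm ∧
    ((fromBlocks R 0 0 1)ᵀ * M * fromBlocks R 0 0 1).rank = M.rank ∧
    ((fromBlocks R 0 0 1)ᵀ * M * fromBlocks R 0 0 1).submatrix Sum.inl Sum.inl
      = Rᵀ * (M.submatrix Sum.inl Sum.inl) * R := by
  set H : Matrix (δ ⊕ γ) (δ ⊕ γ) K := fromBlocks R 0 0 1 with hH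
  have hdet : IsUnit H.det := by rwa [hH, hat_det]
  have hdetT : IsUnit Hᵀ.det := by rwa [det_transpose]
  refine ⟨?_, ?_, ?_⟩
  · show _ᵀ = _
    simp only [transpose_mul, transpose_transpose, Matrix.mul_assoc]
    rw [hM.eq]
  · rw [rank_mul_eq_left_of_isUnit_det _ _ hdet,
      rank_mul_eq_right_of_isUnit_det _ _ hdetT]
  · conv_lhs => rw [← fromBlocks_toBlocks M]
    rw [hH, hat_transpose, fromBlocks_multiply, fromBlocks_multiply]
    rw [submatrix_inl_fromBlocks]
    have : M.toBlocks₁₁ = M.submatrix Sum.inl Sum.inl := rfl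
    simp [this, Matrix.mul_assoc]

private lemma card_congruence (r₂ : ℕ) (P : Matrix δ δ K) (hP : IsUnit P.det)
    (Q : Matrix δ δ K) :
    Nat.card {M : Matrix (δ ⊕ γ) (δ ⊕ γ) K // M.IsSymm ∧ M.rank = r₂ ∧
        M.submatrix Sum.inl Sum.inl = Q} =
    Nat.card {M : Matrix (δ ⊕ γ) (δ ⊕ γ) K // M.IsSymm ∧ M.rank = r₂ ∧
        M.submatrix Sum.inl Sum.inl = Pᵀ * Q * P} := by
  have hP' : IsUnit (P⁻¹).det := by
    rw [det_nonsing_inv]; exact isUnit_ringInverse.mpr hP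
  have hPP : P * P⁻¹ = 1 := mul_nonsing_inv _ hP
  have hPP' : P⁻¹ * P = 1 := nonsing_inv_mul _ hP
  have hHH : (fromBlocks P 0 0 (1 : Matrix γ γ K)) * fromBlocks P⁻¹ 0 0 1 = 1 := by
    rw [hat_mul, hPP, fromBlocks_one]
  have hHH' : (fromBlocks P⁻¹ 0 0 (1 : Matrix γ γ K)) * fromBlocks P 0 0 1 = 1 := by
    rw [hat_mul, hPP', fromBlocks_one]
  apply Nat.card_congr
  refine ⟨fun M => ⟨(fromBlocks P 0 0 1)ᵀ * M.1 * fromBlocks P 0 0 1, ?_⟩,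
     fun N => ⟨(fromBlocks P⁻¹ 0 0 1)ᵀ * N.1 * fromBlocks P⁻¹ 0 0 1, ?_⟩, ?_, ?_⟩
  · obtain ⟨h1, h2, h3⟩ := M.2
    obtain ⟨k1, k2, k3⟩ := conj_key P hP M.1 h1
    exact ⟨k1, by rw [k2, h2], by rw [k3, h3]⟩
  · obtain ⟨h1, h2, h3⟩ := N.2
    obtain ⟨k1, k2, k3⟩ := conj_key P⁻¹ hP' N.1 h1
    refine ⟨k1, by rw [k2, h2], ?_⟩
    rw [k3, h3]
    calc P⁻¹ᵀ * (Pᵀ * Q * P) * P⁻¹ = (P * P⁻¹)ᵀ * Q * (P * P⁻¹) := by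
          rw [transpose_mul]; simp only [Matrix.mul_assoc]
      _ = Q := by rw [hPP, transpose_one, Matrix.one_mul, Matrix.mul_one]
  · intro M
    ext1
    show (fromBlocks P⁻¹ 0 0 1)ᵀ * ((fromBlocks P 0 0 1)ᵀ * M.1 * fromBlocks P 0 0 1) *
        fromBlocks P⁻¹ 0 0 1 = M.1
    calc (fromBlocks P⁻¹ 0 0 1)ᵀ * ((fromBlocks P 0 0 1)ᵀ * M.1 * fromBlocks P 0 0 1) *
        fromBlocks P⁻¹ 0 0 1
        = ((fromBlocks P 0 0 1) * (fromBlocks P⁻¹ 0 0 1))ᵀ * M.1 *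
          ((fromBlocks P 0 0 1) * (fromBlocks P⁻¹ 0 0 1)) := by
          rw [transpose_mul]; simp only [Matrix.mul_assoc]
      _ = M.1 := by rw [hHH, transpose_one, Matrix.one_mul, Matrix.mul_one]
  · intro N
    ext1
    show (fromBlocks P 0 0 1)ᵀ * ((fromBlocks P⁻¹ 0 0 1)ᵀ * N.1 * fromBlocks P⁻¹ 0 0 1) *
        fromBlocks P 0 0 1 = N.1
    calc (fromBlocks P 0 0 1)ᵀ * ((fromBlocks P⁻¹ 0 0 1)ᵀ * N.1 * fromBlocks P⁻¹ 0 0 1) *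
        fromBlocks P 0 0 1
        = ((fromBlocks P⁻¹ 0 0 1) * (fromBlocks P 0 0 1))ᵀ * N.1 *
          ((fromBlocks P⁻¹ 0 0 1) * (fromBlocks P 0 0 1)) := by
          rw [transpose_mul]; simp only [Matrix.mul_assoc]
      _ = N.1 := by rw [hHH', transpose_one, Matrix.one_mul, Matrix.mul_one]

end cong

section schur
variable {K : Type} [Field K] {α β : Type}
    [Fintype α] [DecidableEq α] [Fintype β] [DecidableEq β]

private lemma rank_block (A : Matrix α α K) (hA : A.IsSymm) (uA : IsUnit A.det)
    (X : Matrix α β K) (Z : Matrix β β K) :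
    (fromBlocks A X Xᵀ Z).rank = (fromBlocks A 0 0 (Z - Xᵀ * A⁻¹ * X)).rank := by
  have hAinv : A⁻¹ᵀ = A⁻¹ := by rw [transpose_nonsing_inv, hA.eq]
  have hdet : IsUnit (fromBlocks (1 : Matrix α α K) (-(A⁻¹ * X)) 0 (1 : Matrix β β K)).det := by
    rw [det_fromBlocks_zero₂₁, det_one, det_one, mul_one]; exact isUnit_one
  have hdetT : IsUnit (fromBlocks (1 : Matrix α α K) (-(A⁻¹ * X)) 0 (1 : Matrix β β K))ᵀ.det := by
    rwa [det_transpose]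
  have key : (fromBlocks (1 : Matrix α α K) (-(A⁻¹ * X)) 0 1)ᵀ * fromBlocks A X Xᵀ Z *
      fromBlocks 1 (-(A⁻¹ * X)) 0 1 = fromBlocks A 0 0 (Z - Xᵀ * A⁻¹ * X) := by
    rw [fromBlocks_transpose, fromBlocks_multiply, fromBlocks_multiply]
    have h21 : (-(A⁻¹ * X))ᵀ * A + (1 : Matrix β β K)ᵀ * Xᵀ = 0 := by
      rw [transpose_neg, transpose_mul, hAinv, transpose_one, Matrix.one_mul,
        Matrix.neg_mul, Matrix.mul_assoc, nonsing_inv_mul _ uA, Matrix.mul_one,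
        neg_add_cancel]
    rw [h21]
    simp only [Matrix.zero_mul, Matrix.mul_zero, Matrix.mul_one, Matrix.one_mul,
      transpose_one, add_zero, zero_add, Matrix.mul_neg, transpose_neg, transpose_mul,
      hAinv, transpose_zero, neg_zero, add_zero, Matrix.neg_mul]
    rw [← Matrix.mul_assoc, mul_nonsing_inv _ uA, Matrix.one_mul, neg_add_cancel,
      Matrix.mul_assoc, neg_add_eq_sub]
  rw [← key, rank_mul_eq_left_of_isUnit_det _ _ hdet,
    rank_mul_eq_right_of_isUnit_det _ _ hdetT]

private lemma rank_block2 (A A' : Matrix α α K) (uA : IsUnit A.det) (uA' : IsUnit A'.det)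
    (W : Matrix β β K) :
    (fromBlocks A 0 0 W).rank = (fromBlocks A' 0 0 W).rank := by
  have key : fromBlocks A' 0 0 W =
      fromBlocks (A' * A⁻¹) 0 0 (1 : Matrix β β K) * fromBlocks A 0 0 W := by
    rw [fromBlocks_multiply]
    simp [Matrix.mul_assoc, nonsing_inv_mul _ uA]
  have hdet : IsUnit (fromBlocks (A' * A⁻¹) 0 0 (1 : Matrix β β K)).det := by
    rw [det_fromBlocks_zero₂₁, det_one, mul_one, det_mul]
    exact uA'.mul (by rw [det_nonsing_inv]; exact isUnit_ringInverse.mpr uA)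
  rw [key, rank_mul_eq_right_of_isUnit_det _ _ hdet]

end schur

section schur2
variable {K : Type} [Field K] {α β γ : Type}
    [Fintype α] [DecidableEq α] [Fintype β] [DecidableEq β] [Fintype γ] [DecidableEq γ]

private lemma schur_key (A A' : Matrix α α K) (hA : A.IsSymm) (hA' : A'.IsSymm)
    (uA : IsUnit A.det) (uA' : IsUnit A'.det)
    (M : Matrix (α ⊕ (β ⊕ γ)) (α ⊕ (β ⊕ γ)) K) (h1 : M.IsSymm)
    (h3 : M.submatrix (Sum.map id Sum.inl) (Sum.map id Sum.inl) = fromBlocks A 0 0 0) :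
    (fromBlocks A' M.toBlocks₁₂ M.toBlocks₁₂ᵀ
      (M.toBlocks₂₂ + M.toBlocks₁₂ᵀ * (A'⁻¹ - A⁻¹) * M.toBlocks₁₂)).IsSymm ∧
    (fromBlocks A' M.toBlocks₁₂ M.toBlocks₁₂ᵀ
      (M.toBlocks₂₂ + M.toBlocks₁₂ᵀ * (A'⁻¹ - A⁻¹) * M.toBlocks₁₂)).rank = M.rank ∧
    (fromBlocks A' M.toBlocks₁₂ M.toBlocks₁₂ᵀ
      (M.toBlocks₂₂ + M.toBlocks₁₂ᵀ * (A'⁻¹ - A⁻¹) * M.toBlocks₁₂)).submatrix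
        (Sum.map id Sum.inl) (Sum.map id Sum.inl) = fromBlocks A' 0 0 0 := by
  set X := M.toBlocks₁₂ with hX
  set Z := M.toBlocks₂₂ with hZ
  set C := A'⁻¹ - A⁻¹ with hC
  have hX0 : ∀ a b, X a (Sum.inl b) = 0 := by
    intro a b
    have := congrFun (congrFun h3 (Sum.inl a)) (Sum.inr b)
    simp [Matrix.submatrix_apply] at this; exact this
  have hZ0 : ∀ b b', Z (Sum.inl b) (Sum.inl b') = 0 := by
    intro b b'
    have := congrFun (congrFun h3 (Sum.inr b)) (Sum.inr b')
    simp [Matrix.submatrix_apply] at this; exact this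
  have hA11 : M.toBlocks₁₁ = A := by
    ext a b
    have := congrFun (congrFun h3 (Sum.inl a)) (Sum.inl b)
    simp [Matrix.submatrix_apply] at this; exact this
  have h21 : M.toBlocks₂₁ = Xᵀ := by
    ext b a
    show M (Sum.inr b) (Sum.inl a) = M (Sum.inl a) (Sum.inr b)
    conv_lhs => rw [← h1.eq]
    rfl
  have hZsym : Zᵀ = Z := by
    ext b b'
    show M (Sum.inr b') (Sum.inr b) = M (Sum.inr b) (Sum.inr b')
    conv_lhs => rw [← h1.eq]
    rfl
  have hCsym : Cᵀ = C := by
    rw [hC, transpose_sub, transpose_nonsing_inv, transpose_nonsing_inv, hA.eq, hA'.eq]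
  have hMeq : M = fromBlocks A X Xᵀ Z := by
    conv_lhs => rw [← fromBlocks_toBlocks M, hA11, h21]
  have hXCX0 : ∀ b b', (Xᵀ * C * X) (Sum.inl b) (Sum.inl b') = 0 := by
    intro b b'
    rw [Matrix.mul_apply]
    exact Finset.sum_eq_zero fun k _ => by rw [hX0, mul_zero]
  refine ⟨?_, ?_, ?_⟩
  · show _ᵀ = _
    rw [fromBlocks_transpose, transpose_transpose, hA'.eq, transpose_add, hZsym,
      transpose_mul, transpose_mul, transpose_transpose, hCsym, Matrix.mul_assoc]
  · have e1 : (fromBlocks A' X Xᵀ (Z + Xᵀ * C * X)).rank =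
        (fromBlocks A' 0 0 (Z + Xᵀ * C * X - Xᵀ * A'⁻¹ * X)).rank :=
      rank_block A' hA' uA' X (Z + Xᵀ * C * X)
    have e2 : Z + Xᵀ * C * X - Xᵀ * A'⁻¹ * X = Z - Xᵀ * A⁻¹ * X := by
      rw [hC, Matrix.mul_sub, Matrix.sub_mul]
      abel
    have e3 : (fromBlocks A' 0 0 (Z - Xᵀ * A⁻¹ * X)).rank =
        (fromBlocks A 0 0 (Z - Xᵀ * A⁻¹ * X)).rank := rank_block2 A' A uA' uA _
    rw [e1, e2, e3, ← rank_block A hA uA X Z, ← hMeq]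
  · ext a b
    cases a with
    | inl a =>
      cases b with
      | inl b => rfl
      | inr b => show X a (Sum.inl b) = (0 : Matrix α β K) a b; rw [hX0]; rfl
    | inr a =>
      cases b with
      | inl b => show Xᵀ (Sum.inl a) b = (0 : Matrix β α K) a b; show X b (Sum.inl a) = _;
                 rw [hX0]; rfl
      | inr b =>
        show (Z + Xᵀ * C * X) (Sum.inl a) (Sum.inl b) = (0 : Matrix β β K) a b
        rw [Matrix.add_apply, hZ0, hXCX0, add_zero]; rfl

private lemma card_schur (r₂ : ℕ) (A A' : Matrix α α K) (hA : A.IsSymm) (hA' : A'.IsSymm)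
    (uA : IsUnit A.det) (uA' : IsUnit A'.det) :
    Nat.card {M : Matrix (α ⊕ (β ⊕ γ)) (α ⊕ (β ⊕ γ)) K // M.IsSymm ∧ M.rank = r₂ ∧
        M.submatrix (Sum.map id Sum.inl) (Sum.map id Sum.inl) = fromBlocks A 0 0 0} =
    Nat.card {M : Matrix (α ⊕ (β ⊕ γ)) (α ⊕ (β ⊕ γ)) K // M.IsSymm ∧ M.rank = r₂ ∧
        M.submatrix (Sum.map id Sum.inl) (Sum.map id Sum.inl) = fromBlocks A' 0 0 0} := by
  have round : ∀ (B B' : Matrix α α K) (M : Matrix (α ⊕ (β ⊕ γ)) (α ⊕ (β ⊕ γ)) K),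
      M.IsSymm →
      M.submatrix (Sum.map id Sum.inl) (Sum.map id Sum.inl) = fromBlocks B 0 0 0 →
      (let N := fromBlocks B' M.toBlocks₁₂ M.toBlocks₁₂ᵀ
        (M.toBlocks₂₂ + M.toBlocks₁₂ᵀ * (B'⁻¹ - B⁻¹) * M.toBlocks₁₂);
       fromBlocks B N.toBlocks₁₂ N.toBlocks₁₂ᵀ
        (N.toBlocks₂₂ + N.toBlocks₁₂ᵀ * (B⁻¹ - B'⁻¹) * N.toBlocks₁₂) = M) := by
    intro B B' M h1 h3
    have hA11 : M.toBlocks₁₁ = B := by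
      ext a b
      have := congrFun (congrFun h3 (Sum.inl a)) (Sum.inl b)
      simp [Matrix.submatrix_apply] at this; exact this
    have h21 : M.toBlocks₂₁ = M.toBlocks₁₂ᵀ := by
      ext b a
      show M (Sum.inr b) (Sum.inl a) = M (Sum.inl a) (Sum.inr b)
      conv_lhs => rw [← h1.eq]
      rfl
    simp only [toBlocks_fromBlocks₁₂, toBlocks_fromBlocks₂₂]
    have : M.toBlocks₂₂ + M.toBlocks₁₂ᵀ * (B'⁻¹ - B⁻¹) * M.toBlocks₁₂ +
        M.toBlocks₁₂ᵀ * (B⁻¹ - B'⁻¹) * M.toBlocks₁₂ = M.toBlocks₂₂ := by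
      rw [Matrix.mul_sub, Matrix.mul_sub, Matrix.sub_mul, Matrix.sub_mul]
      abel
    rw [this]
    conv_rhs => rw [← fromBlocks_toBlocks M, hA11, h21]
  apply Nat.card_congr
  refine ⟨fun M => ⟨fromBlocks A' M.1.toBlocks₁₂ M.1.toBlocks₁₂ᵀ
      (M.1.toBlocks₂₂ + M.1.toBlocks₁₂ᵀ * (A'⁻¹ - A⁻¹) * M.1.toBlocks₁₂), ?_⟩,
    fun N => ⟨fromBlocks A N.1.toBlocks₁₂ N.1.toBlocks₁₂ᵀ
      (N.1.toBlocks₂₂ + N.1.toBlocks₁₂ᵀ * (A⁻¹ - A'⁻¹) * N.1.toBlocks₁₂), ?_⟩, ?_, ?_⟩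
  · obtain ⟨h1, h2, h3⟩ := M.2
    obtain ⟨k1, k2, k3⟩ := schur_key A A' hA hA' uA uA' M.1 h1 h3
    exact ⟨k1, by rw [k2, h2], k3⟩
  · obtain ⟨h1, h2, h3⟩ := N.2
    obtain ⟨k1, k2, k3⟩ := schur_key A' A hA' hA uA' uA N.1 h1 h3
    exact ⟨k1, by rw [k2, h2], k3⟩
  · intro M
    ext1
    exact round A A' M.1 M.2.1 M.2.2.2
  · intro N
    ext1
    exact round A' A N.1 N.2.1 N.2.2.2

end schur2

private lemma exists_canonical {K : Type} [Field K] (d₁ r₁ : ℕ) (hr : r₁ ≤ d₁)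
    (E₁ : Fin d₁ ≃ Fin r₁ ⊕ Fin (d₁ - r₁))
    (Q : Matrix (Fin d₁) (Fin d₁) K) (hQ : Q.IsSymm) (hQrank : Q.rank = r₁) :
    ∃ (P : Matrix (Fin d₁) (Fin d₁) K) (Q₀ : Matrix (Fin r₁) (Fin r₁) K),
      IsUnit P.det ∧ Q₀.IsSymm ∧ IsUnit Q₀.det ∧
      Matrix.reindex E₁ E₁ (Pᵀ * Q * P) = fromBlocks Q₀ 0 0 0 := by
  classical
  have hdim : Module.finrank K (Fin d₁ → K) = d₁ := by simp
  have hkerdim : Module.finrank K (LinearMap.ker Q.mulVecLin) = d₁ - r₁ := by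
    have h2 := LinearMap.finrank_range_add_finrank_ker Q.mulVecLin
    rw [hdim] at h2
    have hr' : Module.finrank K (LinearMap.range Q.mulVecLin) = r₁ := hQrank
    omega
  obtain ⟨W, hW⟩ := Submodule.exists_isCompl (LinearMap.ker Q.mulVecLin)
  have hWdim : Module.finrank K W = r₁ := by
    have h3 := Submodule.finrank_add_eq_of_isCompl hW
    rw [hdim, hkerdim] at h3
    omega
  let bW : Module.Basis (Fin r₁) K W := Module.finBasisOfFinrankEq K W hWdim
  let bK : Module.Basis (Fin (d₁ - r₁)) K (LinearMap.ker Q.mulVecLin) :=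
    Module.finBasisOfFinrankEq K _ hkerdim
  let B : Module.Basis (Fin r₁ ⊕ Fin (d₁ - r₁)) K (Fin d₁ → K) :=
    (bW.prod bK).map (Submodule.prodEquivOfIsCompl W _ hW.symm)
  have hBinl : ∀ a, (B (Sum.inl a) : Fin d₁ → K) = (bW a : Fin d₁ → K) := by
    intro a
    show Submodule.prodEquivOfIsCompl W _ hW.symm ((bW.prod bK) (Sum.inl a)) = _
    have h4 : (bW.prod bK) (Sum.inl a) = ((bW a : W), (0 : LinearMap.ker Q.mulVecLin)) :=
      Prod.ext (Module.Basis.prod_apply_inl_fst _ _ _) (Module.Basis.prod_apply_inl_snd _ _ _)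
    rw [h4, Submodule.coe_prodEquivOfIsCompl']
    simp
  have hBinr : ∀ x, (B (Sum.inr x) : Fin d₁ → K) = (bK x : Fin d₁ → K) := by
    intro x
    show Submodule.prodEquivOfIsCompl W _ hW.symm ((bW.prod bK) (Sum.inr x)) = _
    have h4 : (bW.prod bK) (Sum.inr x) = ((0 : W), (bK x : LinearMap.ker Q.mulVecLin)) :=
      Prod.ext (Module.Basis.prod_apply_inr_fst _ _ _) (Module.Basis.prod_apply_inr_snd _ _ _)
    rw [h4, Submodule.coe_prodEquivOfIsCompl']
    simp
  have hkerB : ∀ x, Q *ᵥ (B (Sum.inr x)) = 0 := by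
    intro x
    rw [hBinr]
    have h5 := LinearMap.mem_ker.mp (bK x).2
    rwa [mulVecLin_apply] at h5
  set e := Pi.basisFun K (Fin d₁) with he
  set B' : Module.Basis (Fin d₁) K (Fin d₁ → K) := B.reindex E₁.symm with hB'
  set P := e.toMatrix B' with hP
  have hPdet : IsUnit P.det := by
    have h1 : P * B'.toMatrix e = 1 := Module.Basis.toMatrix_mul_toMatrix_flip e B'
    have h6 := congrArg Matrix.det h1
    rw [det_mul, det_one] at h6
    exact IsUnit.of_mul_eq_one _ h6
  have hPapp : ∀ i a, P i a = B (E₁ a) i := by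
    intro i a
    rw [hP, Module.Basis.toMatrix_apply, he, Pi.basisFun_repr, hB', Module.Basis.reindex_apply]
    simp
  have hEntry : ∀ i i', (Pᵀ * Q * P) i i' = B (E₁ i) ⬝ᵥ (Q *ᵥ B (E₁ i')) := by
    intro i i'
    rw [Matrix.mul_assoc, Matrix.mul_apply]
    simp only [transpose_apply, hPapp]
    refine Finset.sum_congr rfl fun a _ => ?_
    congr 1
    rw [Matrix.mul_apply, Matrix.mulVec, dotProduct]
    exact Finset.sum_congr rfl fun b _ => by rw [hPapp]
  have hsymmdot : ∀ u v : Fin d₁ → K, u ⬝ᵥ (Q *ᵥ v) = v ⬝ᵥ (Q *ᵥ u) := by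
    intro u v
    rw [dotProduct_mulVec, ← mulVec_transpose, dotProduct_comm, hQ.eq]
  set Q₀ : Matrix (Fin r₁) (Fin r₁) K :=
    Matrix.of (fun a b => B (Sum.inl a) ⬝ᵥ (Q *ᵥ B (Sum.inl b))) with hQ₀
  have hblocks : Matrix.reindex E₁ E₁ (Pᵀ * Q * P) = fromBlocks Q₀ 0 0 0 := by
    ext c c'
    rw [reindex_apply, submatrix_apply, hEntry, Equiv.apply_symm_apply,
      Equiv.apply_symm_apply]
    cases c with
    | inl a =>
      cases c' with
      | inl b => rfl
      | inr x => rw [hkerB]; simp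
    | inr x =>
      cases c' with
      | inl b => rw [hsymmdot, hkerB]; simp
      | inr y => rw [hkerB]; simp
  refine ⟨P, Q₀, hPdet, ?_, ?_, hblocks⟩
  · show Q₀ᵀ = Q₀
    ext a b
    exact hsymmdot _ _
  · rw [isUnit_iff_ne_zero]
    intro hdet0
    obtain ⟨v, hv0, hv⟩ := Matrix.exists_mulVec_eq_zero_iff.mpr hdet0
    set u' : Fin d₁ → K := fun i => Sum.elim v (0 : Fin (d₁ - r₁) → K) (E₁ i) with hu'
    have hu'0 : (Pᵀ * Q * P) *ᵥ u' = 0 := by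
      funext i
      have h7 : ((Pᵀ * Q * P) *ᵥ u') i =
          ((fromBlocks Q₀ 0 0 (0 : Matrix (Fin (d₁ - r₁)) (Fin (d₁ - r₁)) K)) *ᵥ (Sum.elim v 0)) (E₁ i) := by
        rw [Matrix.mulVec, Matrix.mulVec, dotProduct, dotProduct]
        refine Fintype.sum_equiv E₁ _ _ fun i' => ?_
        congr 1
        have h8 := congrFun (congrFun hblocks.symm (E₁ i)) (E₁ i')
        rw [reindex_apply, submatrix_apply, Equiv.symm_apply_apply,
          Equiv.symm_apply_apply] at h8
        exact h8.symm
      rw [h7, fromBlocks_mulVec]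
      simp [hv]
    have hQPu' : (Q * P) *ᵥ u' = 0 := by
      have h1 : Pᵀ *ᵥ ((Q * P) *ᵥ u') = 0 := by
        rw [mulVec_mulVec, ← Matrix.mul_assoc]
        exact hu'0
      have hPT : IsUnit Pᵀ.det := by rwa [det_transpose]
      have h3 := congrArg (fun z => Pᵀ⁻¹ *ᵥ z) h1
      simp only [mulVec_mulVec, mulVec_zero] at h3
      rw [← Matrix.mul_assoc, nonsing_inv_mul _ hPT, Matrix.one_mul] at h3
      exact h3
    set w : Fin d₁ → K := P *ᵥ u' with hw
    have hwsum : w = ∑ a, v a • (B (Sum.inl a) : Fin d₁ → K) := by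
      funext i
      rw [hw, Matrix.mulVec, dotProduct]
      have h9 : ∀ i', P i i' * u' i' = Sum.elim v 0 (E₁ i') * B (E₁ i') i := by
        intro i'
        rw [hPapp, hu', mul_comm]
      rw [Finset.sum_congr rfl fun i' _ => h9 i']
      have hre : ∑ i', Sum.elim v 0 (E₁ i') * B (E₁ i') i =
          ∑ c, Sum.elim v 0 c * B c i :=
        Fintype.sum_equiv E₁ _ _ fun i' => rfl
      rw [hre, Fintype.sum_sum_type]
      simp [Finset.sum_apply]
    have hwK : w ∈ LinearMap.ker Q.mulVecLin := by
      rw [LinearMap.mem_ker, mulVecLin_apply, hw, mulVec_mulVec]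
      exact hQPu'
    have hwW : w ∈ W := by
      rw [hwsum]
      exact Submodule.sum_mem _ fun a _ =>
        Submodule.smul_mem _ _ (by rw [hBinl]; exact (bW a).2)
    have hw0 : w = 0 := (Submodule.disjoint_def.mp hW.disjoint) w hwK hwW
    have hva : ∀ a, v a = 0 := by
      have hli := B.linearIndependent.comp Sum.inl Sum.inl_injective
      refine Fintype.linearIndependent_iff.mp hli v ?_
      have hcomp : ∑ i : Fin r₁, v i • (⇑B ∘ Sum.inl) i =
          ∑ a, v a • (B (Sum.inl a) : Fin d₁ → K) := rfl
      rw [hcomp, ← hwsum]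
      exact hw0
    exact hv0 (funext hva)

/-- Over a finite field, the number of extensions of a symmetric bilinear form of rank
`r₁` on `F_q^{d₁}` to a symmetric bilinear form of rank `r₂` on `F_q^{d₂}` does not
depend on the form: here `F_q^{d₁}` sits inside `F_q^{d₂}` as the span of the first
`d₁` standard basis vectors, and restriction is along this embedding. -/
theorem stmt_6 (K : Type) [Field K] [Fintype K] (d₁ d₂ r₁ r₂ : ℕ)
    (h : d₁ ≤ d₂) (hr : r₁ ≤ d₁)
    (Q Q' : Matrix (Fin d₁) (Fin d₁) K)
    (hQ : Q.IsSymm) (hQrank : Q.rank = r₁)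
    (hQ' : Q'.IsSymm) (hQ'rank : Q'.rank = r₁) :
    Nat.card {M : Matrix (Fin d₂) (Fin d₂) K //
        M.IsSymm ∧ M.rank = r₂ ∧ M.submatrix (Fin.castLE h) (Fin.castLE h) = Q} =
      Nat.card {M : Matrix (Fin d₂) (Fin d₂) K //
        M.IsSymm ∧ M.rank = r₂ ∧ M.submatrix (Fin.castLE h) (Fin.castLE h) = Q'} := by
  classical
  have hd₂ : d₂ = d₁ + (d₂ - d₁) := by omega
  have hd₁ : d₁ = r₁ + (d₁ - r₁) := by omega
  let E₂ : Fin d₂ ≃ Fin d₁ ⊕ Fin (d₂ - d₁) := (finCongr hd₂).trans finSumFinEquiv.symm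
  let E₁ : Fin d₁ ≃ Fin r₁ ⊕ Fin (d₁ - r₁) := (finCongr hd₁).trans finSumFinEquiv.symm
  let E₃ : (Fin d₁ ⊕ Fin (d₂ - d₁)) ≃ (Fin r₁ ⊕ (Fin (d₁ - r₁) ⊕ Fin (d₂ - d₁))) :=
    (Equiv.sumCongr E₁ (Equiv.refl _)).trans (Equiv.sumAssoc _ _ _)
  have hc2 : ∀ t : Fin d₁, E₂ (Fin.castLE h t) = Sum.inl ((Equiv.refl (Fin d₁)) t) := by
    intro t
    show finSumFinEquiv.symm (finCongr hd₂ (Fin.castLE h t)) = Sum.inl t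
    have h5 : finCongr hd₂ (Fin.castLE h t) = Fin.castAdd (d₂ - d₁) t := by
      ext; rfl
    rw [h5, finSumFinEquiv_symm_apply_castAdd]
  have hc3 : ∀ t : Fin d₁, E₃ (Sum.inl t) = Sum.map id Sum.inl (E₁ t) := by
    intro t
    show Equiv.sumAssoc _ _ _ (Sum.inl (E₁ t)) = Sum.map id Sum.inl (E₁ t)
    cases E₁ t <;> rfl
  obtain ⟨P, Q₀, hPdet, hQ₀s, hQ₀d, hPQ⟩ := exists_canonical d₁ r₁ hr E₁ Q hQ hQrank
  obtain ⟨P', Q₀', hP'det, hQ₀'s, hQ₀'d, hPQ'⟩ :=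
    exists_canonical d₁ r₁ hr E₁ Q' hQ' hQ'rank
  have chain : ∀ (R : Matrix (Fin d₁) (Fin d₁) K) (PR : Matrix (Fin d₁) (Fin d₁) K)
      (R₀ : Matrix (Fin r₁) (Fin r₁) K), IsUnit PR.det →
      Matrix.reindex E₁ E₁ (PRᵀ * R * PR) = fromBlocks R₀ 0 0 0 →
      Nat.card {M : Matrix (Fin d₂) (Fin d₂) K //
        M.IsSymm ∧ M.rank = r₂ ∧ M.submatrix (Fin.castLE h) (Fin.castLE h) = R} =
      Nat.card {M : Matrix (Fin r₁ ⊕ (Fin (d₁ - r₁) ⊕ Fin (d₂ - d₁)))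
          (Fin r₁ ⊕ (Fin (d₁ - r₁) ⊕ Fin (d₂ - d₁))) K //
        M.IsSymm ∧ M.rank = r₂ ∧
        M.submatrix (Sum.map id Sum.inl) (Sum.map id Sum.inl) = fromBlocks R₀ 0 0 0} := by
    intro R PR R₀ hPRdet hPR
    calc Nat.card {M : Matrix (Fin d₂) (Fin d₂) K //
          M.IsSymm ∧ M.rank = r₂ ∧ M.submatrix (Fin.castLE h) (Fin.castLE h) = R}
        = Nat.card {M : Matrix (Fin d₁ ⊕ Fin (d₂ - d₁)) (Fin d₁ ⊕ Fin (d₂ - d₁)) K //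
          M.IsSymm ∧ M.rank = r₂ ∧ M.submatrix Sum.inl Sum.inl =
            Matrix.reindex (Equiv.refl _) (Equiv.refl _) R} :=
          card_reindex_aux r₂ E₂ (Equiv.refl (Fin d₁)) (Fin.castLE h) Sum.inl hc2 R
      _ = Nat.card {M : Matrix (Fin d₁ ⊕ Fin (d₂ - d₁)) (Fin d₁ ⊕ Fin (d₂ - d₁)) K //
          M.IsSymm ∧ M.rank = r₂ ∧ M.submatrix Sum.inl Sum.inl = R} := by
          rw [show Matrix.reindex (Equiv.refl (Fin d₁)) (Equiv.refl (Fin d₁)) R = R by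
            ext; simp]
      _ = Nat.card {M : Matrix (Fin d₁ ⊕ Fin (d₂ - d₁)) (Fin d₁ ⊕ Fin (d₂ - d₁)) K //
          M.IsSymm ∧ M.rank = r₂ ∧ M.submatrix Sum.inl Sum.inl = PRᵀ * R * PR} :=
          card_congruence r₂ PR hPRdet R
      _ = Nat.card {M : Matrix (Fin r₁ ⊕ (Fin (d₁ - r₁) ⊕ Fin (d₂ - d₁)))
            (Fin r₁ ⊕ (Fin (d₁ - r₁) ⊕ Fin (d₂ - d₁))) K //
          M.IsSymm ∧ M.rank = r₂ ∧
          M.submatrix (Sum.map id Sum.inl) (Sum.map id Sum.inl) =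
            Matrix.reindex E₁ E₁ (PRᵀ * R * PR)} :=
          card_reindex_aux r₂ E₃ E₁ Sum.inl (Sum.map id Sum.inl) hc3 (PRᵀ * R * PR)
      _ = Nat.card {M : Matrix (Fin r₁ ⊕ (Fin (d₁ - r₁) ⊕ Fin (d₂ - d₁)))
            (Fin r₁ ⊕ (Fin (d₁ - r₁) ⊕ Fin (d₂ - d₁))) K //
          M.IsSymm ∧ M.rank = r₂ ∧
          M.submatrix (Sum.map id Sum.inl) (Sum.map id Sum.inl) = fromBlocks R₀ 0 0 0} := by
          rw [hPR]
  rw [chain Q P Q₀ hPdet hPQ, chain Q' P' Q₀' hP'det hPQ',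
    card_schur r₂ Q₀ Q₀' hQ₀s hQ₀'s hQ₀d hQ₀'d]
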